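/- If G is a (2K₂, diamond)-free graph with clique number ω = 2, then χ(G) ≤ 3. -/

import Mathlib

open SimpleGraph

/-- `H` occurs as an induced subgraph of `G`. -/
def IsInducedCopy {α β : Type*} (H : SimpleGraph α) (G : SimpleGraph β) : Prop :=
  ∃ f : α ↪ β, ∀ a b : α, G.Adj (f a) (f b) ↔ H.Adj a b

/-- `G` is `H`-free: no induced copy of `H`. -/
def Free {α β : Type*} (G : SimpleGraph α) (H : SimpleGraph β) : Prop :=
  ¬ IsInducedCopy H G

/-- `P₃ ∪ P₂`: disjoint union of a path on 3 vertices and an edge. -/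
def P3UP2 : SimpleGraph (Fin 5) :=
  SimpleGraph.fromRel (fun a b => (a, b) ∈ [((0 : Fin 5), (1 : Fin 5)), (1, 2), (3, 4)])

/-- The diamond: `K₄` minus an edge. -/
def diamondG : SimpleGraph (Fin 4) :=
  SimpleGraph.fromRel (fun a b =>
    (a, b) ∈ [((0 : Fin 4), (2 : Fin 4)), (0, 3), (1, 2), (1, 3), (2, 3)])

/-- `2K₂`: two disjoint edges. -/
def twoK2 : SimpleGraph (Fin 4) :=
  SimpleGraph.fromRel (fun a b => (a, b) ∈ [((0 : Fin 4), (1 : Fin 4)), (2, 3)])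

/-- `P₄ ∪ P₂`. -/
def P4UP2 : SimpleGraph (Fin 6) :=
  SimpleGraph.fromRel (fun a b =>
    (a, b) ∈ [((0 : Fin 6), (1 : Fin 6)), (1, 2), (2, 3), (4, 5)])

/-- The cycle on `n` vertices (for `n ≥ 3`), as a graph on `ZMod n`. -/
def cycG (n : ℕ) : SimpleGraph (ZMod n) :=
  SimpleGraph.fromRel (fun a b => b = a + 1)

/-- A graph is perfect if every induced subgraph has chromatic number
equal to its clique number. -/
def IsPerfect {V : Type*} (G : SimpleGraph V) : Prop :=
  ∀ s : Set V, (G.induce s).chromaticNumber = ((G.induce s).cliqueNum : ℕ∞)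

/-- The set `C_{ij}` attached to a maximum clique enumerated by `f : Fin ω ↪ V`:
vertices outside the clique, non-adjacent to both `f i` and `f j`, where `(i,j)`
is the lexicographically least such pair (this closed form is equivalent to the
iterative definition removing earlier `C`-sets). -/
def Cset {V : Type*} (G : SimpleGraph V) {ω : ℕ} (f : Fin ω ↪ V) (i j : Fin ω) : Set V :=
  {v | v ∉ Set.range f ∧ ¬ G.Adj v (f i) ∧ ¬ G.Adj v (f j) ∧
    ∀ p q : Fin ω, p < q → ¬ G.Adj v (f p) → ¬ G.Adj v (f q) →
      i < p ∨ (i = p ∧ j ≤ q)}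

/-- The set `I_a` attached to a maximum clique enumerated by `f : Fin ω ↪ V`:
vertices outside the clique adjacent to every clique vertex except `f k`. -/
def Iset {V : Type*} (G : SimpleGraph V) {ω : ℕ} (f : Fin ω ↪ V) (k : Fin ω) : Set V :=
  {v | v ∉ Set.range f ∧ ¬ G.Adj v (f k) ∧ ∀ l : Fin ω, l ≠ k → G.Adj v (f l)}

theorem stmt17 {V : Type*} [Fintype V] (G : SimpleGraph V) (h1 : _root_.Free G twoK2)
    (h2 : _root_.Free G diamondG) (hω : G.cliqueNum = 2) :
    G.chromaticNumber ≤ (3 : ℕ∞) := by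
  classical
  obtain ⟨s, hs⟩ := G.exists_isNClique_cliqueNum
  rw [hω] at hs
  obtain ⟨x₁, x₂, hne, rfl⟩ := Finset.card_eq_two.mp hs.card_eq
  have hadj : G.Adj x₁ x₂ := hs.isClique (by simp) (by simp) hne
  have htf : ∀ a b c : V, G.Adj a b → G.Adj a c → G.Adj b c → False := by
    intro a b c hab hac hbc
    have hcl : G.IsClique ({a, b, c} : Finset V) := by
      intro x hx y hy hxy
      simp only [Finset.coe_insert, Set.mem_insert_iff, Finset.coe_singleton,
        Finset.mem_singleton] at hx hy
      rcases hx with rfl | rfl | rfl <;> rcases hy with rfl | rfl | rfl <;>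
        first | exact absurd rfl hxy | assumption | exact hab.symm | exact hac.symm | exact hbc.symm
    have hcard : ({a, b, c} : Finset V).card = 3 := by
      rw [Finset.card_insert_of_notMem, Finset.card_insert_of_notMem, Finset.card_singleton]
      · simp [hbc.ne]
      · simp [hab.ne, hac.ne]
    have := IsClique.card_le_cliqueNum (tc := hcl)
    omega
  have h2k2 : ∀ u v : V, G.Adj u v → ¬G.Adj u x₁ → ¬G.Adj u x₂ → ¬G.Adj v x₁ →
      ¬G.Adj v x₂ → False := by
    intro u v huv hu1 hu2 hv1 hv2
    apply h1
    have hux1 : u ≠ x₁ := fun h => hu2 (h ▸ hadj)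
    have hux2 : u ≠ x₂ := fun h => hu1 (h ▸ hadj.symm)
    have hvx1 : v ≠ x₁ := fun h => hv2 (h ▸ hadj)
    have hvx2 : v ≠ x₂ := fun h => hv1 (h ▸ hadj.symm)
    have hinj : Function.Injective (fun i : Fin 4 => [u, v, x₁, x₂].get (i.cast (by simp))) := by
      intro a b hab
      fin_cases a <;> fin_cases b <;>
        simp_all [List.get] <;>
        first
          | rfl
          | exact absurd hab huv.ne | exact absurd hab.symm huv.ne
          | exact absurd hab hux1 | exact absurd hab.symm hux1
          | exact absurd hab hux2 | exact absurd hab.symm hux2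
          | exact absurd hab hvx1 | exact absurd hab.symm hvx1
          | exact absurd hab hvx2 | exact absurd hab.symm hvx2
          | exact absurd hab hne | exact absurd hab.symm hne
    refine ⟨⟨_, hinj⟩, ?_⟩
    intro a b
    fin_cases a <;> fin_cases b <;>
      simp [twoK2, List.get, List.getElem_cons_succ, List.getElem_cons_zero, Fin.isValue, show ((3:Fin 4):ℕ)=3 from rfl, G.irrefl, huv, huv.symm, hadj, hadj.symm,
        hu1, hu2, hv1, hv2, fun h => hu1 (G.adj_symm h), fun h => hu2 (G.adj_symm h),
        fun h => hv1 (G.adj_symm h), fun h => hv2 (G.adj_symm h)] <;>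
      first
        | exact fun h => hu1 h.symm
        | exact fun h => hu2 h.symm
        | exact fun h => hv1 h.symm
        | exact fun h => hv2 h.symm
  have hcol : G.Colorable 3 := by
    refine ⟨Coloring.mk (fun v => if G.Adj v x₁ then 0 else if G.Adj v x₂ then 1 else 2) ?_⟩
    intro u v huv
    by_cases hu1 : G.Adj u x₁ <;> by_cases hv1 : G.Adj v x₁ <;>
      by_cases hu2 : G.Adj u x₂ <;> by_cases hv2 : G.Adj v x₂ <;>
      simp only [hu1, hv1, hu2, hv2, if_true, if_false] <;>
      first
        | decide
        | exact fun _ => htf u v x₁ huv hu1 hv1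
        | exact fun _ => htf u v x₂ huv hu2 hv2
        | exact fun _ => h2k2 u v huv hu1 hu2 hv1 hv2
  calc G.chromaticNumber ≤ (3 : ℕ) := hcol.chromaticNumber_le
    _ ≤ (3 : ℕ∞) := by norm_num
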